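/- arXiv:2202.07069 — 12 statements merged into one kernel-verified Lean document; each statement's English description precedes it below -/
import Mathlib

section
/- Let V be a commutative unital quantale, let (X,a) and (Y,b) be V-categories, let i : (X,a) → (Y,b) be an initial V-functor, and let f : (X,a) → (V,hom) be a V-functor. Then there exists a V-functor g : (Y,b) → (V,hom) such that g ∘ i = f. (The V-category (V,hom) is injective with respect to initial V-functors.) -/
universe u v w

open CategoryTheory

/-- `V` is a (commutative unital) quantale: the tensor distributes over suprema. -/
def QuantaleLaw (V : Type u) [CompleteLattice V] [CommMonoid V] : Prop :=
  ∀ (u : V) (s : Set V), u * sSup s = ⨆ v ∈ s, u * v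

/-- Internal hom of the quantale: `hom u w = ⨆ {v | u ⊗ v ≤ w}`. -/
def qhom {V : Type u} [CompleteLattice V] [CommMonoid V] (u w : V) : V :=
  sSup {v | u * v ≤ w}

/-- `a` is a `V`-category structure on `X`. -/
def IsVCat {V : Type u} [CompleteLattice V] [CommMonoid V] {X : Type v}
    (a : X → X → V) : Prop :=
  (∀ x, (1 : V) ≤ a x x) ∧ ∀ x y z, a x y * a y z ≤ a x z

/-- `f` is a `V`-functor from `(X,a)` to `(Y,b)`. -/
def IsVFunctor {V : Type u} [CompleteLattice V] {X : Type v} {Y : Type w}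
    (a : X → X → V) (b : Y → Y → V) (f : X → Y) : Prop :=
  ∀ x y, a x y ≤ b (f x) (f y)

/-- `f` is an initial `V`-functor from `(X,a)` to `(Y,b)`. -/
def IsInitialVFunctor {V : Type u} {X : Type v} {Y : Type w}
    (a : X → X → V) (b : Y → Y → V) (f : X → Y) : Prop :=
  ∀ x y, a x y = b (f x) (f y)

/-- The `V`-category structure of the power `V^κ`. -/
def powStr {V : Type u} [CompleteLattice V] [CommMonoid V] (κ : Type v)
    (p q : κ → V) : V :=
  ⨅ i, qhom (p i) (q i)

/-- The graph of a function, as a `V`-relation: `k` on the graph, `⊥` elsewhere. -/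
def fnGraph {V : Type u} [CompleteLattice V] [CommMonoid V] {X : Type v} {Y : Type w}
    (f : X → Y) : X → Y → V :=
  fun x y => ⨆ _ : f x = y, (1 : V)

/-- A lifting of a `Set`-functor `F` to `V`-Cat. -/
structure Lifting (V : Type u) [CompleteLattice V] [CommMonoid V]
    (F : Type u ⥤ Type u) where
  str : ∀ {X : Type u}, (X → X → V) → F.obj X → F.obj X → V
  isVCat : ∀ {X : Type u} (a : X → X → V), IsVCat a → IsVCat (str a)
  map : ∀ {X Y : Type u} (a : X → X → V) (b : Y → Y → V) (f : X → Y),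
    IsVCat a → IsVCat b → IsVFunctor a b f →
    IsVFunctor (str a) (str b) (F.map (TypeCat.ofHom f))

/-- A `κ`-ary `V`-valued predicate lifting for a `Set`-functor `F`. -/
structure PredLifting (V : Type u) [CompleteLattice V] [CommMonoid V]
    (F : Type u ⥤ Type u) (κ : Type u) where
  app : ∀ {X : Type u}, (X → κ → V) → F.obj X → V
  natural : ∀ {X Y : Type u} (f : X → Y) (p : Y → κ → V) (t : F.obj X),
    app (fun x => p (f x)) t = app p (F.map (TypeCat.ofHom f) t)

/-- A predicate lifting is monotone if it preserves the pointwise order of predicates. -/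
def PredLifting.Mono {V : Type u} [CompleteLattice V] [CommMonoid V]
    {F : Type u ⥤ Type u} {κ : Type u} (lam : PredLifting V F κ) : Prop :=
  ∀ (X : Type u) (p q : X → κ → V), (∀ x i, p x i ≤ q x i) →
    ∀ t, lam.app p t ≤ lam.app q t

/-- A predicate lifting is compatible with a lifting `L` if it lifts `V`-functorial
predicates to `V`-functorial predicates. -/
def Compatible {V : Type u} [CompleteLattice V] [CommMonoid V] {F : Type u ⥤ Type u}
    (L : Lifting V F) {κ : Type u} (lam : PredLifting V F κ) : Prop :=
  ∀ (X : Type u) (a : X → X → V), IsVCat a → ∀ f : X → κ → V,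
    IsVFunctor a (powStr κ) f → IsVFunctor (L.str a) qhom (lam.app f)

/-- The Kantorovich `V`-category structure on `F.obj X` induced by a family of
predicate liftings. -/
noncomputable def kantStr {V : Type u} [CompleteLattice V] [CommMonoid V]
    {F : Type u ⥤ Type u} {ι : Type v} {κ : ι → Type u}
    (Λ : ∀ l, PredLifting V F (κ l)) {X : Type u} (a : X → X → V)
    (t s : F.obj X) : V :=
  ⨅ l, ⨅ f : {f : X → κ l → V // IsVFunctor a (powStr (κ l)) f},
    qhom ((Λ l).app f.1 t) ((Λ l).app f.1 s)

/-- A generalized predicate lifting for `(F, L)` with parameter `V`-category `(A, α)`. -/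
structure GenPredLifting (V : Type u) [CompleteLattice V] [CommMonoid V]
    (F : Type u ⥤ Type u) (L : Lifting V F) (A : Type u) (α : A → A → V) where
  app : ∀ {Z : Type u}, (Z → Z → V) → (Z → A) → F.obj Z → V
  isVFunctor : ∀ {Z : Type u} (c : Z → Z → V), IsVCat c → ∀ f : Z → A,
    IsVFunctor c α f → IsVFunctor (L.str c) qhom (app c f)
  natural : ∀ {Z Z' : Type u} (c : Z → Z → V) (c' : Z' → Z' → V),
    IsVCat c → IsVCat c' → ∀ (u : Z → Z'), IsVFunctor c c' u →
    ∀ (g : Z' → A), IsVFunctor c' α g →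
    ∀ t : F.obj Z, app c (fun z => g (u z)) t = app c' g (F.map (TypeCat.ofHom u) t)

/-- A lax extension of a `Set`-functor `F` to `V`-Rel. -/
structure LaxExt (V : Type u) [CompleteLattice V] [CommMonoid V]
    (F : Type u ⥤ Type u) where
  ext : ∀ {X Y : Type u}, (X → Y → V) → F.obj X → F.obj Y → V
  mono : ∀ {X Y : Type u} (r r' : X → Y → V), (∀ x y, r x y ≤ r' x y) →
    ∀ t s, ext r t s ≤ ext r' t s
  comp : ∀ {X Y Z : Type u} (r : X → Y → V) (s : Y → Z → V)
    (t : F.obj X) (w : F.obj Z),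
    (⨆ u : F.obj Y, ext r t u * ext s u w) ≤
      ext (fun x z => ⨆ y, r x y * s y z) t w
  lax_map : ∀ {X Y : Type u} (f : X → Y) (t : F.obj X),
    (1 : V) ≤ ext (fnGraph f) t (F.map (TypeCat.ofHom f) t)
  lax_map_op : ∀ {X Y : Type u} (f : X → Y) (t : F.obj X),
    (1 : V) ≤ ext (fun y x => fnGraph f x y) (F.map (TypeCat.ofHom f) t) t

/-- The `V`-category `(V, hom)` is injective w.r.t. initial `V`-functors. -/
theorem stmt_0 {V : Type u} [CompleteLattice V] [CommMonoid V] (hV : QuantaleLaw V)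
    {X Y : Type u} (a : X → X → V) (b : Y → Y → V)
    (ha : IsVCat a) (hb : IsVCat b)
    (i : X → Y) (hi : IsInitialVFunctor a b i)
    (f : X → V) (hf : IsVFunctor a qhom f) :
    ∃ g : Y → V, IsVFunctor b qhom g ∧ ∀ x, g (i x) = f x := by
  -- tensor distributes over indexed suprema
  have hsup : ∀ (u : V) {ι : Type u} (s : ι → V), u * (⨆ j, s j) = ⨆ j, u * s j := by
    intro u ι s
    rw [← sSup_range, hV u (Set.range s), iSup_range]
  -- multiplication is monotone on the left
  have hmono : ∀ (u : V) {s t : V}, s ≤ t → u * s ≤ u * t := by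
    intro u s t hst
    have h := hV u {s, t}
    rw [sSup_pair, sup_eq_right.mpr hst] at h
    rw [h]
    simp only [Set.mem_insert_iff, Set.mem_singleton_iff, iSup_le_iff]
    exact le_biSup (fun v => u * v) (Set.mem_insert s {t})
  -- adjunction consequence: u * qhom u w ≤ w
  have hadj : ∀ u w : V, u * qhom u w ≤ w := by
    intro u w
    rw [qhom, hV u]
    simp only [iSup_le_iff, Set.mem_setOf_eq]
    exact fun v hv => hv
  have hfa : ∀ x y, f x * a x y ≤ f y := fun x y =>
    le_trans (hmono _ (hf x y)) (hadj _ _)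
  refine ⟨fun y => ⨆ x, f x * b (i x) y, ?_, ?_⟩
  · intro y y'
    refine le_sSup ?_
    show (⨆ x, f x * b (i x) y) * b y y' ≤ ⨆ x, f x * b (i x) y'
    rw [mul_comm, hsup]
    refine iSup_le fun x => ?_
    refine le_trans ?_ (le_iSup _ x)
    rw [mul_comm, mul_assoc]
    exact hmono _ (hb.2 _ _ _)
  · intro x
    apply le_antisymm
    · refine iSup_le fun x' => ?_
      rw [← hi]
      exact hfa x' x
    · refine le_trans ?_ (le_iSup _ x)
      rw [← hi]
      calc f x = f x * 1 := (mul_one _).symm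
        _ ≤ f x * a x x := hmono _ (ha.1 x)
end

section
/- Let V be a commutative unital quantale and (X,a) a V-category. For all x,y ∈ X, a x y equals the infimum, over all V-functors f : (X,a) → (V,hom), of hom (f x) (f y). (The cone of all V-functors into (V,hom) is initial.) -/
universe u v w

open CategoryTheory

/-- The cone of all `V`-functors into `(V, hom)` is initial. -/
theorem stmt_1 {V : Type u} [CompleteLattice V] [CommMonoid V] (hV : QuantaleLaw V)
    {X : Type u} (a : X → X → V) (ha : IsVCat a) (x y : X) :
    a x y = ⨅ f : {f : X → V // IsVFunctor a qhom f}, qhom (f.1 x) (f.1 y) := by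
  apply le_antisymm
  · exact le_iInf fun f => f.2 x y
  · have hyon : IsVFunctor a qhom (a x) := by
      intro y z
      exact le_sSup (by simpa [mul_comm] using ha.2 x y z)
    refine le_trans (iInf_le _ ⟨a x, hyon⟩) (sSup_le fun v hv => ?_)
    have hmono : v ≤ a x x * v := by
      have h1 : sSup {(1 : V), a x x} = a x x :=
        le_antisymm (sSup_le (by rintro w (rfl | rfl) <;> simp [ha.1 x])) (le_sSup (by simp))
      have := hV v {(1 : V), a x x}
      rw [h1] at this
      calc v = v * 1 := (mul_one v).symm
      _ ≤ ⨆ w ∈ ({(1 : V), a x x} : Set V), v * w := le_biSup _ (by simp)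
      _ = v * a x x := this.symm
      _ = a x x * v := mul_comm _ _
    exact hmono.trans hv
end

section
/- Let V be a commutative unital quantale, (X,a) a V-category, κ a type, and f : X → (κ → V) a function. The following are equivalent: (1) f is a V-functor (X,a) → V^κ, i.e. a x y ≤ ⨅ᵢ hom (f x i) (f y i) for all x,y; (2) for all x ∈ X and i ∈ κ, ⨆_z (f z i ⊗ a z x) = f x i; (3) for all x ∈ X and i ∈ κ, ⨆_z (f z i ⊗ a z x) ≤ f x i (i.e. the transpose f♭ given by f♭ i x = f x i is a V-distributor from the discrete V-category on κ to (X,a)). -/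
universe u v w

open CategoryTheory

lemma qmul_mono {V : Type u} [CompleteLattice V] [CommMonoid V] (hV : QuantaleLaw V)
    {u v w : V} (h : v ≤ w) : u * v ≤ u * w := by
  have hs : sSup {v, w} = w := by simp [sSup_pair, sup_eq_right.mpr h]
  have := hV u {v, w}
  rw [hs] at this
  rw [this]
  exact le_iSup₂ (f := fun x (_ : x ∈ ({v, w} : Set V)) => u * x) v (by simp)

lemma qhom_adj {V : Type u} [CompleteLattice V] [CommMonoid V] (hV : QuantaleLaw V)
    (u v w : V) : u * v ≤ w ↔ v ≤ qhom u w := by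
  constructor
  · intro h; exact le_sSup h
  · intro h
    refine (qmul_mono hV h).trans ?_
    rw [qhom, hV u]
    exact iSup₂_le fun x hx => hx

/-- characterizations of `V`-functors into powers of `V`
(`f` is a `V`-functor iff its transpose is a `V`-distributor). -/
theorem stmt_2 {V : Type u} [CompleteLattice V] [CommMonoid V] (hV : QuantaleLaw V)
    {X κ : Type u} (a : X → X → V) (ha : IsVCat a) (f : X → κ → V) :
    (IsVFunctor a (powStr κ) f ↔ ∀ x i, (⨆ z, f z i * a z x) = f x i) ∧
    (IsVFunctor a (powStr κ) f ↔ ∀ x i, (⨆ z, f z i * a z x) ≤ f x i) := by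
  have key : IsVFunctor a (powStr κ) f ↔ ∀ x i, (⨆ z, f z i * a z x) ≤ f x i := by
    constructor
    · intro h x i
      exact iSup_le fun z => (qhom_adj hV _ _ _).mpr ((h z x).trans (iInf_le _ i))
    · intro h x y
      exact le_iInf fun i =>
        (qhom_adj hV _ _ _).mp ((le_iSup (fun z => f z i * a z y) x).trans (h y i))
  refine ⟨?_, key⟩
  rw [key]
  constructor
  · intro h x i
    refine le_antisymm (h x i) ?_
    calc f x i = f x i * 1 := (mul_one _).symm
      _ ≤ f x i * a x x := qmul_mono hV (ha.1 x)
      _ ≤ ⨆ z, f z i * a z x := le_iSup (fun z => f z i * a z x) x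
  · intro h x i
    exact (h x i).le
end

section
/- Let V be a commutative unital quantale, F : Type u ⥤ Type u a functor, L a lifting of F to V-Cat, and (X,a) a V-category. Let Λ be a family of generalized predicate liftings for (F,L), say λ_j with parameter V-category (A_j,α_j) for j in an index set J. Suppose that every V-functor h : (F.obj X, L a) → (V,hom) is of the form λ_j(f) for some j ∈ J and some V-functor f : (X,a) → (A_j,α_j). Then for all 𝔵,𝔶 ∈ F.obj X, L a 𝔵 𝔶 = ⨅_{j ∈ J} ⨅_{f : (X,a) → (A_j,α_j) V-functor} hom (λ_j(f) 𝔵) (λ_j(f) 𝔶). -/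
universe u v w

open CategoryTheory

/-- if every `V`-functor `(F.obj X, L a) → (V,hom)` arises from a family of
generalized predicate liftings, then `L a` is the initial structure w.r.t. that family. -/
theorem stmt_3 {V : Type u} [CompleteLattice V] [CommMonoid V] (hV : QuantaleLaw V)
    {F : Type u ⥤ Type u} (L : Lifting V F)
    {X : Type u} (a : X → X → V) (ha : IsVCat a)
    {J : Type v} (A : J → Type u) (α : ∀ j, A j → A j → V) (hα : ∀ j, IsVCat (α j))
    (Λ : ∀ j, GenPredLifting V F L (A j) (α j))
    (hsurj : ∀ h : F.obj X → V, IsVFunctor (L.str a) qhom h →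
      ∃ (j : J) (f : X → A j), IsVFunctor a (α j) f ∧ h = (Λ j).app a f)
    (t s : F.obj X) :
    L.str a t s = ⨅ j, ⨅ f : {f : X → A j // IsVFunctor a (α j) f},
      qhom ((Λ j).app a f.1 t) ((Λ j).app a f.1 s) := by
  -- multiplication is monotone in the right argument, from the quantale law
  have hmono : ∀ u v w : V, v ≤ w → u * v ≤ u * w := by
    intro u v w hvw
    have h1 : u * sSup {v, w} = ⨆ x ∈ ({v, w} : Set V), u * x := hV u {v, w}
    have h2 : sSup ({v, w} : Set V) = w := by
      rw [sSup_pair, sup_eq_right.mpr hvw]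
    rw [h2] at h1
    rw [h1]
    exact le_biSup (fun x => u * x) (Set.mem_insert v {w})
  apply le_antisymm
  · -- easy direction: each λ_j(f) is a V-functor into (V, qhom)
    apply le_iInf; intro j
    apply le_iInf; intro f
    exact (Λ j).isVFunctor a ha f.1 f.2 t s
  · -- hard direction: use h := L.str a t
    have hLa := L.isVCat a ha
    have hfun : IsVFunctor (L.str a) qhom (L.str a t) := by
      intro x y
      exact le_sSup (hLa.2 t x y)
    obtain ⟨j, f, hf, heq⟩ := hsurj (L.str a t) hfun
    have key : (⨅ j, ⨅ f : {f : X → A j // IsVFunctor a (α j) f},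
        qhom ((Λ j).app a f.1 t) ((Λ j).app a f.1 s)) ≤
        qhom (L.str a t t) (L.str a t s) := by
      refine le_trans (iInf_le _ j) ?_
      refine le_trans (iInf_le _ ⟨f, hf⟩) ?_
      rw [← heq]
    refine le_trans key ?_
    -- qhom (L.str a t t) (L.str a t s) ≤ L.str a t s since 1 ≤ L.str a t t
    apply sSup_le
    intro v hv
    calc v = 1 * v := (one_mul v).symm
      _ ≤ L.str a t t * v := by
          rw [mul_comm, mul_comm (L.str a t t) v]; exact hmono v 1 _ (hLa.1 t)
      _ ≤ L.str a t s := hv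
end

section
/- Let V be a commutative unital quantale, F : Type u ⥤ Type u a functor, λ a monotone κ-ary predicate lifting for F, and (X,a) a V-category. For p : X → κ → V define (a⋆p) x i = ⨆_z (p z i ⊗ a z x). Then for all 𝔵,𝔶 ∈ F.obj X: ⨅_{p : X → κ → V} hom (λ_X p 𝔵) (λ_X (a⋆p) 𝔶) = ⨅_{p : X → κ → V with a⋆p ≤ p pointwise} hom (λ_X p 𝔵) (λ_X p 𝔶). -/
universe u v w

open CategoryTheory

section Aux
variable {V : Type u} [CompleteLattice V] [CommMonoid V]

lemma aux_mul_mono_right (hV : QuantaleLaw V) {u v v' : V} (h : v ≤ v') :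
    u * v ≤ u * v' := by
  have hs : sSup {v, v'} = v' := by rw [sSup_pair, sup_eq_right.mpr h]
  calc u * v ≤ ⨆ w ∈ ({v, v'} : Set V), u * w := le_biSup _ (by simp)
    _ = u * sSup {v, v'} := (hV u _).symm
    _ = u * v' := by rw [hs]

lemma aux_mul_iSup (hV : QuantaleLaw V) (u : V) {ι : Sort v} (f : ι → V) :
    u * (⨆ i, f i) = ⨆ i, u * f i := by
  rw [iSup, hV u, iSup_range]

lemma aux_qhom_mono_right {u w w' : V} (h : w ≤ w') : qhom u w ≤ qhom u w' :=
  sSup_le_sSup fun v hv => le_trans hv h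

lemma aux_qhom_anti_left (hV : QuantaleLaw V) {u u' w : V} (h : u' ≤ u) :
    qhom u w ≤ qhom u' w := by
  apply sSup_le_sSup
  intro v hv
  calc u' * v = v * u' := mul_comm _ _
    _ ≤ v * u := aux_mul_mono_right hV h
    _ = u * v := mul_comm _ _
    _ ≤ w := hv

end Aux

/-- for a monotone predicate lifting, the infimum over all predicates of
`hom (λ p 𝔵) (λ (a⋆p) 𝔶)` equals the infimum over the `V`-distributors `p` (those with
`a⋆p ≤ p`) of `hom (λ p 𝔵) (λ p 𝔶)`. -/
theorem stmt_4 {V : Type u} [CompleteLattice V] [CommMonoid V] (hV : QuantaleLaw V)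
    {F : Type u ⥤ Type u} {κ : Type u} (lam : PredLifting V F κ) (hmono : lam.Mono)
    {X : Type u} (a : X → X → V) (ha : IsVCat a) (t s : F.obj X) :
    (⨅ p : X → κ → V,
        qhom (lam.app p t) (lam.app (fun x i => ⨆ z, p z i * a z x) s)) =
    ⨅ p : {p : X → κ → V // ∀ x i, (⨆ z, p z i * a z x) ≤ p x i},
        qhom (lam.app p.1 t) (lam.app p.1 s) := by
  apply le_antisymm
  · apply le_iInf
    intro p
    refine le_trans (iInf_le _ p.1) ?_
    exact aux_qhom_mono_right (hmono X _ _ p.2 s)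
  · apply le_iInf
    intro p
    set q : X → κ → V := fun x i => ⨆ z, p z i * a z x with hqdef
    have hq : ∀ x i, (⨆ z, q z i * a z x) ≤ q x i := by
      intro x i
      apply iSup_le
      intro z
      rw [mul_comm, hqdef]
      simp only
      rw [aux_mul_iSup hV]
      apply iSup_le
      intro w
      calc a z x * (p w i * a w z) = (p w i * a w z) * a z x := mul_comm _ _
        _ = p w i * (a w z * a z x) := mul_assoc _ _ _
        _ ≤ p w i * a w x := aux_mul_mono_right hV (ha.2 w z x)
        _ ≤ ⨆ z', p z' i * a z' x := le_iSup (fun z' => p z' i * a z' x) w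
    refine le_trans (iInf_le _ ⟨q, hq⟩) ?_
    apply aux_qhom_anti_left hV
    apply hmono
    intro x i
    calc p x i = p x i * 1 := (mul_one _).symm
      _ ≤ p x i * a x x := aux_mul_mono_right hV (ha.1 x)
      _ ≤ ⨆ z, p z i * a z x := le_iSup (fun z => p z i * a z x) x
end

section
/- Let V be a commutative unital quantale, F : Type u ⥤ Type u a functor, and Λ a family of predicate liftings for F, where λ ∈ Λ has arity κ_λ : Type u. If i : (X,a) → (Y,b) is an initial V-functor, then for all 𝔵,𝔶 ∈ F.obj X, F^Λ a 𝔵 𝔶 = F^Λ b (F.map i 𝔵) (F.map i 𝔶). (Every Kantorovich lifting preserves initial morphisms.) -/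
universe u v w

open CategoryTheory

section Aux

variable {V : Type u} [CompleteLattice V] [CommMonoid V]

lemma q_mul_iSup (hV : QuantaleLaw V) {ι' : Sort*} (u : V) (s : ι' → V) :
    u * (⨆ i, s i) = ⨆ i, u * s i := by
  rw [iSup, hV u (Set.range s), iSup_range]

lemma q_mul_le_mul_left (hV : QuantaleLaw V) {u v w : V} (h : v ≤ w) :
    u * v ≤ u * w := by
  have : u * (v ⊔ w) = u * v ⊔ u * w := by
    have := q_mul_iSup hV u (fun b : Bool => if b then v else w)
    simpa [iSup_bool_eq] using this
  calc u * v ≤ u * v ⊔ u * w := le_sup_left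
    _ = u * (v ⊔ w) := this.symm
    _ = u * w := by rw [sup_eq_right.2 h]

lemma q_mul_le_mul_right (hV : QuantaleLaw V) {u v w : V} (h : v ≤ w) :
    v * u ≤ w * u := by rw [mul_comm v u, mul_comm w u]; exact q_mul_le_mul_left hV h

lemma le_qhom_iff (hV : QuantaleLaw V) {u v w : V} :
    v ≤ qhom u w ↔ u * v ≤ w := by
  constructor
  · intro h
    calc u * v ≤ u * qhom u w := q_mul_le_mul_left hV h
      _ = ⨆ x ∈ {x | u * x ≤ w}, u * x := by rw [qhom, hV]
      _ ≤ w := iSup₂_le fun x hx => hx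
  · intro h; exact le_sSup h

end Aux

/-- every Kantorovich lifting preserves initial morphisms. -/
theorem stmt_6 {V : Type u} [CompleteLattice V] [CommMonoid V] (hV : QuantaleLaw V)
    {F : Type u ⥤ Type u} {ι : Type v} {κ : ι → Type u}
    (Λ : ∀ l, PredLifting V F (κ l))
    {X Y : Type u} (a : X → X → V) (b : Y → Y → V) (ha : IsVCat a) (hb : IsVCat b)
    (i : X → Y) (hi : IsInitialVFunctor a b i) (t s : F.obj X) :
    kantStr Λ a t s = kantStr Λ b (F.map (TypeCat.ofHom i) t) (F.map (TypeCat.ofHom i) s) := by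
  have hiVF : IsVFunctor a b i := fun x y => (hi x y).le
  apply le_antisymm
  · refine le_iInf fun l => le_iInf fun g => ?_
    have hfi : IsVFunctor a (powStr (κ l)) (fun x => g.1 (i x)) := by
      intro x y; rw [hi x y]; exact g.2 (i x) (i y)
    refine le_trans (iInf₂_le l (⟨_, hfi⟩ : {f : X → κ l → V // IsVFunctor a (powStr (κ l)) f})) ?_
    rw [(Λ l).natural i g.1 t, (Λ l).natural i g.1 s]
  · refine le_iInf fun l => le_iInf fun f => ?_
    set g : Y → κ l → V := fun y j => ⨆ x, b (i x) y * f.1 x j with hg_def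
    have hgVF : IsVFunctor b (powStr (κ l)) g := by
      intro y y'
      refine le_iInf fun j => (le_qhom_iff hV).2 ?_
      rw [mul_comm, hg_def]
      simp only
      rw [q_mul_iSup hV]
      refine iSup_le fun x => ?_
      calc b y y' * (b (i x) y * f.1 x j)
          = (b (i x) y * b y y') * f.1 x j := by rw [← mul_assoc, mul_comm (b y y')]
        _ ≤ b (i x) y' * f.1 x j := q_mul_le_mul_right hV (hb.2 (i x) y y')
        _ ≤ ⨆ x, b (i x) y' * f.1 x j := le_iSup (fun x => b (i x) y' * f.1 x j) x
    have hgi : (fun x => g (i x)) = f.1 := by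
      funext x; funext j
      apply le_antisymm
      · refine iSup_le fun x' => ?_
        rw [← hi x' x, mul_comm]
        exact (le_qhom_iff hV).1 ((f.2 x' x).trans (iInf_le _ j))
      · calc f.1 x j = 1 * f.1 x j := (one_mul _).symm
          _ ≤ b (i x) (i x) * f.1 x j := q_mul_le_mul_right hV (hi x x ▸ ha.1 x)
          _ ≤ ⨆ x', b (i x') (i x) * f.1 x' j := le_iSup (fun x' => b (i x') (i x) * f.1 x' j) x
    refine le_trans (iInf₂_le l (⟨g, hgVF⟩ : {g' : Y → κ l → V // IsVFunctor b (powStr (κ l)) g'})) ?_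
    rw [← (Λ l).natural i g t, ← (Λ l).natural i g s, hgi]
end

section
/- Let V be a commutative unital quantale, F : Type u ⥤ Type u a functor, and L a lifting of F to V-Cat that preserves initial morphisms. Then for every V-category (X,a) and all 𝔵,𝔶 ∈ F.obj X: L a 𝔵 𝔶 equals the infimum, taken over all types κ : Type u, all κ-ary predicate liftings λ for F that are compatible with L, and all V-functors f : (X,a) → V^κ, of hom (λ_X f 𝔵) (λ_X f 𝔶). (Every lifting preserving initial morphisms is Kantorovich.) -/
universe u v w

open CategoryTheory

section Aux

variable {V : Type u} [CompleteLattice V] [CommMonoid V]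

lemma aux_mul_le_mul_left (hV : QuantaleLaw V) (u : V) {v v' : V} (h : v ≤ v') :
    u * v ≤ u * v' := by
  have h1 : sSup ({v, v'} : Set V) = v' := by
    rw [sSup_pair, sup_eq_right.mpr h]
  have h2 := hV u {v, v'}
  rw [h1] at h2
  rw [h2]
  exact le_biSup _ (by simp)

lemma aux_mul_le_mul_right (hV : QuantaleLaw V) (v : V) {u u' : V} (h : u ≤ u') :
    u * v ≤ u' * v := by
  rw [mul_comm u, mul_comm u']
  exact aux_mul_le_mul_left hV v h

lemma aux_le_qhom {u v w : V} (h : u * v ≤ w) : v ≤ qhom u w := le_sSup h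

lemma aux_mul_qhom_le (hV : QuantaleLaw V) (u w : V) : u * qhom u w ≤ w := by
  rw [qhom, hV u]
  exact iSup₂_le fun v hv => hv

lemma aux_one_le_qhom_self (u : V) : (1 : V) ≤ qhom u u :=
  le_sSup (by simp)

lemma aux_qhom_trans (hV : QuantaleLaw V) (u v w : V) :
    qhom u v * qhom v w ≤ qhom u w := by
  refine aux_le_qhom ?_
  calc u * (qhom u v * qhom v w) = (u * qhom u v) * qhom v w := (mul_assoc _ _ _).symm
    _ ≤ v * qhom v w := aux_mul_le_mul_right hV _ (aux_mul_qhom_le hV u v)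
    _ ≤ w := aux_mul_qhom_le hV v w

lemma aux_qhom_le_of_one_le (hV : QuantaleLaw V) {u w : V} (h : (1 : V) ≤ u) :
    qhom u w ≤ w := by
  refine sSup_le fun v hv => ?_
  calc v = 1 * v := (one_mul v).symm
    _ ≤ u * v := aux_mul_le_mul_right hV v h
    _ ≤ w := hv

lemma aux_isVCat_pow (hV : QuantaleLaw V) (κ : Type v) :
    IsVCat (powStr (V := V) κ) := by
  constructor
  · exact fun p => le_iInf fun i => aux_one_le_qhom_self _
  · intro p q r
    refine le_iInf fun i => ?_
    calc powStr κ p q * powStr κ q r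
        ≤ qhom (p i) (q i) * powStr κ q r :=
          aux_mul_le_mul_right hV _ (iInf_le _ i)
      _ ≤ qhom (p i) (q i) * qhom (q i) (r i) :=
          aux_mul_le_mul_left hV _ (iInf_le _ i)
      _ ≤ qhom (p i) (r i) := aux_qhom_trans hV _ _ _

lemma aux_qhom_covariant {W : Type v} (b : W → W → V) (hb : IsVCat b) (w0 : W) :
    IsVFunctor b qhom (fun w => b w0 w) :=
  fun w w' => aux_le_qhom (hb.2 w0 w w')

/-- The (contravariant) Yoneda embedding `x ↦ a (-, x)`. -/
def auxYon {X : Type v} (a : X → X → V) : X → X → V := fun x z => a z x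

lemma auxYon_functor {X : Type v} (a : X → X → V) (ha : IsVCat a) :
    IsVFunctor a (powStr X) (auxYon a) :=
  fun x y => le_iInf fun z => aux_le_qhom (ha.2 z x y)

lemma auxYon_initial (hV : QuantaleLaw V) {X : Type v} (a : X → X → V) (ha : IsVCat a) :
    IsInitialVFunctor a (powStr X) (auxYon a) := by
  intro x y
  refine le_antisymm (auxYon_functor a ha x y) ?_
  calc powStr X (auxYon a x) (auxYon a y) ≤ qhom (a x x) (a x y) := iInf_le _ x
    _ ≤ a x y := aux_qhom_le_of_one_le hV (ha.1 x)

end Aux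

/-- every lifting preserving initial morphisms is Kantorovich, w.r.t.
the class of all compatible predicate liftings. -/
theorem stmt_7 {V : Type u} [CompleteLattice V] [CommMonoid V] (hV : QuantaleLaw V)
    {F : Type u ⥤ Type u} (L : Lifting V F)
    (hpres : ∀ {X Y : Type u} (a : X → X → V) (b : Y → Y → V) (f : X → Y),
      IsVCat a → IsVCat b → IsInitialVFunctor a b f →
      IsInitialVFunctor (L.str a) (L.str b) (F.map (TypeCat.ofHom f)))
    {X : Type u} (a : X → X → V) (ha : IsVCat a) (t s : F.obj X) :
    L.str a t s =
      ⨅ (κ : Type u) (lam : {lam : PredLifting V F κ // Compatible L lam})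
        (f : {f : X → κ → V // IsVFunctor a (powStr κ) f}),
        qhom (lam.1.app f.1 t) (lam.1.app f.1 s) := by
  have hpow : IsVCat (powStr (V := V) X) := aux_isVCat_pow hV X
  refine le_antisymm ?_ ?_
  · exact le_iInf fun κ => le_iInf fun lam => le_iInf fun f =>
      lam.2 X a ha f.1 f.2 t s
  · -- the Kantorovich predicate lifting of arity `X` determined by `t`
    set t0 : F.obj (X → V) := F.map (TypeCat.ofHom (auxYon a)) t with ht0
    let lam : PredLifting V F X :=
      { app := fun {Z} p w => L.str (powStr X) t0 (F.map (TypeCat.ofHom p) w)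
        natural := fun {Z Z'} f p w =>
          congrArg (L.str (powStr X) t0)
            (CategoryTheory.FunctorToTypes.map_comp_apply F (TypeCat.ofHom f) (TypeCat.ofHom p) w) }
    have hcompat : Compatible L lam := by
      intro Z c hc p hp w w'
      have h1 : IsVFunctor (L.str c) (L.str (powStr X)) (F.map (TypeCat.ofHom p)) :=
        L.map c (powStr X) p hc hpow hp
      have h2 : IsVFunctor (L.str (powStr X)) qhom (L.str (powStr X) t0) :=
        aux_qhom_covariant _ (L.isVCat (powStr X) hpow) t0
      exact le_trans (h1 w w') (h2 _ _)
    have hinit : IsInitialVFunctor (L.str a) (L.str (powStr X)) (F.map (TypeCat.ofHom (auxYon a))) :=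
      hpres a (powStr X) (auxYon a) ha hpow (auxYon_initial hV a ha)
    refine iInf_le_of_le X (iInf_le_of_le ⟨lam, hcompat⟩
      (iInf_le_of_le ⟨auxYon a, auxYon_functor a ha⟩ ?_))
    show qhom (L.str (powStr X) t0 (F.map (TypeCat.ofHom (auxYon a)) t))
        (L.str (powStr X) t0 (F.map (TypeCat.ofHom (auxYon a)) s)) ≤ L.str a t s
    rw [ht0, ← hinit t t, ← hinit t s]
    exact aux_qhom_le_of_one_le hV ((L.isVCat a ha).1 t)
end

section
/- Let V be a commutative unital quantale, F : Type u ⥤ Type u a functor, L a lifting of F to V-Cat, and S a family of predicate liftings for F (λ ∈ S of arity κ_λ : Type u). Then every λ ∈ S is compatible with L if and only if for every V-category (X,a) and all 𝔵,𝔶 ∈ F.obj X, L a 𝔵 𝔶 ≤ F^S a 𝔵 𝔶. (This is the Galois-connection property making the Kantorovich lifting a right adjoint to the assignment of compatible predicate liftings.) -/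
universe u v w

open CategoryTheory

/-- the Galois-connection property of the Kantorovich lifting: every member
of `S` is compatible with `L` iff `L ≤ F^S` pointwise. -/
theorem stmt_9 {V : Type u} [CompleteLattice V] [CommMonoid V] (hV : QuantaleLaw V)
    {F : Type u ⥤ Type u} (L : Lifting V F)
    {ι : Type v} {κ : ι → Type u} (S : ∀ l, PredLifting V F (κ l)) :
    (∀ l, Compatible L (S l)) ↔
      ∀ (X : Type u) (a : X → X → V), IsVCat a → ∀ t s : F.obj X,
        L.str a t s ≤ kantStr S a t s := by
  constructor
  · intro h X a ha t s
    exact le_iInf fun l => le_iInf fun f => h l X a ha f.1 f.2 t s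
  · intro h l X a ha f hf t s
    exact le_trans (h X a ha t s) (iInf_le_of_le l (iInf_le _ (⟨f, hf⟩ : {f : X → κ l → V // IsVFunctor a (powStr (κ l)) f})))
end

section
/- Let V be a commutative unital quantale, F : Type u ⥤ Type u a functor, and L a lifting of F to V-Cat. Then L is topological: for every V-category (X,a) and all 𝔵,𝔶 ∈ F.obj X, L a 𝔵 𝔶 equals the infimum, taken over all V-categories (B,β) with B : Type u, all V-functors f : (X,a) → (B,β), and all V-functors h : (F.obj B, L β) → (V,hom), of hom (h (F.map f 𝔵)) (h (F.map f 𝔶)). -/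
universe u v w

open CategoryTheory

/-- every lifting of a `Set`-functor to `V`-Cat is topological. -/
theorem stmt_10 {V : Type u} [CompleteLattice V] [CommMonoid V] (hV : QuantaleLaw V)
    {F : Type u ⥤ Type u} (L : Lifting V F)
    {X : Type u} (a : X → X → V) (ha : IsVCat a) (t s : F.obj X) :
    L.str a t s =
      ⨅ (B : Type u) (β : {β : B → B → V // IsVCat β})
        (f : {f : X → B // IsVFunctor a β.1 f})
        (h : {h : F.obj B → V // IsVFunctor (L.str β.1) qhom h}),
        qhom (h.1 (F.map (TypeCat.ofHom f.1) t)) (h.1 (F.map (TypeCat.ofHom f.1) s)) := by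
  have mul_mono : ∀ u u' w : V, u ≤ u' → u * w ≤ u' * w := by
    intro u u' w h
    have : w * u' = w * sSup {u, u'} := by
      rw [sSup_pair, sup_eq_right.mpr h]
    calc u * w = w * u := mul_comm _ _
      _ ≤ w * u' := by
          rw [this, hV w {u, u'}]
          exact le_iSup₂_of_le u (Or.inl rfl) le_rfl
      _ = u' * w := mul_comm _ _
  apply le_antisymm
  · apply le_iInf; intro B
    apply le_iInf; intro β
    apply le_iInf; intro f
    apply le_iInf; intro h
    calc L.str a t s ≤ L.str β.1 (F.map (TypeCat.ofHom f.1) t) (F.map (TypeCat.ofHom f.1) s) :=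
          L.map a β.1 f.1 ha β.2 f.2 t s
      _ ≤ _ := h.2 _ _
  · have hLa := L.isVCat a ha
    have hfun : IsVFunctor (L.str a) qhom (fun w => L.str a t w) := by
      intro x y
      apply le_sSup
      exact hLa.2 t x y
    refine le_trans (iInf_le _ X) ?_
    refine le_trans (iInf_le _ ⟨a, ha⟩) ?_
    refine le_trans (iInf_le _ ⟨id, fun x y => le_rfl⟩) ?_
    refine le_trans (iInf_le _ ⟨fun w => L.str a t w, hfun⟩) ?_
    have hmapid : ∀ w : F.obj X, F.map (TypeCat.ofHom (id : X → X)) w = w := by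
      intro w
      have : F.map (𝟙 X) w = w := by rw [F.map_id]; rfl
      exact this
    simp only [hmapid]
    -- qhom (L.str a t t) (L.str a t s) ≤ L.str a t s
    apply sSup_le
    intro v hv
    calc v = 1 * v := (one_mul v).symm
      _ ≤ L.str a t t * v := mul_mono _ _ _ (hLa.1 t)
      _ ≤ L.str a t s := hv
end

section
/- Let V be a commutative unital quantale, F : Type u ⥤ Type u a functor, and L a lifting of F to V-Cat. Let (λ_j)_{j∈J} be a family of generalized predicate liftings for (F,L) with parameter V-categories (A_j,α_j), and suppose each (A_j,α_j) is injective with respect to initial V-functors: for every initial V-functor i : (X,a) → (Y,b) and every V-functor f : (X,a) → (A_j,α_j) there is a V-functor g : (Y,b) → (A_j,α_j) with g ∘ i = f. Define T a 𝔵 𝔶 = ⨅_{j∈J} ⨅_{f : (X,a) → (A_j,α_j) V-functor} hom (λ_j(f) 𝔵) (λ_j(f) 𝔶). Then T preserves initial morphisms: if i : (X,a) → (Y,b) is an initial V-functor, then T a 𝔵 𝔶 = T b (F.map i 𝔵) (F.map i 𝔶) for all 𝔵,𝔶 ∈ F.obj X. -/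
universe u v w

open CategoryTheory

/-- a topological lifting w.r.t. generalized predicate liftings whose
parameter `V`-categories are injective w.r.t. initial `V`-functors preserves initial
morphisms. -/
theorem stmt_11 {V : Type u} [CompleteLattice V] [CommMonoid V] (hV : QuantaleLaw V)
    {F : Type u ⥤ Type u} (L : Lifting V F)
    {J : Type v} (A : J → Type u) (α : ∀ j, A j → A j → V) (hα : ∀ j, IsVCat (α j))
    (Λ : ∀ j, GenPredLifting V F L (A j) (α j))
    (hinj : ∀ (j : J) {X Y : Type u} (a : X → X → V) (b : Y → Y → V),
      IsVCat a → IsVCat b → ∀ i : X → Y, IsInitialVFunctor a b i →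
      ∀ f : X → A j, IsVFunctor a (α j) f →
        ∃ g : Y → A j, IsVFunctor b (α j) g ∧ ∀ x, g (i x) = f x)
    {X Y : Type u} (a : X → X → V) (b : Y → Y → V) (ha : IsVCat a) (hb : IsVCat b)
    (i : X → Y) (hi : IsInitialVFunctor a b i) (t s : F.obj X) :
    (⨅ j, ⨅ f : {f : X → A j // IsVFunctor a (α j) f},
        qhom ((Λ j).app a f.1 t) ((Λ j).app a f.1 s)) =
    ⨅ j, ⨅ g : {g : Y → A j // IsVFunctor b (α j) g},
        qhom ((Λ j).app b g.1 (F.map (TypeCat.ofHom i) t)) ((Λ j).app b g.1 (F.map (TypeCat.ofHom i) s)) := by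
  have hiF : IsVFunctor a b i := fun x y => le_of_eq (hi x y)
  apply le_antisymm
  · refine le_iInf fun j => le_iInf fun g => ?_
    have hgi : IsVFunctor a (α j) (fun x => g.1 (i x)) := fun x y => by
      rw [hi x y]; exact g.2 (i x) (i y)
    have hnat := (Λ j).natural a b ha hb i hiF g.1 g.2
    calc (⨅ j, ⨅ f : {f : X → A j // IsVFunctor a (α j) f},
        qhom ((Λ j).app a f.1 t) ((Λ j).app a f.1 s))
        ≤ qhom ((Λ j).app a (fun x => g.1 (i x)) t)
            ((Λ j).app a (fun x => g.1 (i x)) s) :=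
          iInf_le_of_le j (iInf_le _ (⟨fun x => g.1 (i x), hgi⟩ : {f : X → A j // IsVFunctor a (α j) f}))
      _ = _ := by rw [hnat t, hnat s]
  · refine le_iInf fun j => le_iInf fun f => ?_
    obtain ⟨g, hg, hgi⟩ := hinj j a b ha hb i hi f.1 f.2
    have hnat := (Λ j).natural a b ha hb i hiF g hg
    calc (⨅ j, ⨅ g : {g : Y → A j // IsVFunctor b (α j) g},
        qhom ((Λ j).app b g.1 (F.map (TypeCat.ofHom i) t)) ((Λ j).app b g.1 (F.map (TypeCat.ofHom i) s)))
        ≤ qhom ((Λ j).app b g (F.map (TypeCat.ofHom i) t)) ((Λ j).app b g (F.map (TypeCat.ofHom i) s)) :=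
          iInf_le_of_le j (iInf_le _ (⟨g, hg⟩ : {g : Y → A j // IsVFunctor b (α j) g}))
      _ = _ := by
          rw [← hnat t, ← hnat s]
          simp only [hgi]
end

section
/- Let V be a commutative unital quantale, F : Type u ⥤ Type u a functor, and L a lifting of F to V-Cat. There exists a lax extension E of F to V-Rel such that E a = L a (as V-category structures on F.obj X) for every V-category (X,a), if and only if L preserves initial morphisms and L is locally monotone, i.e. for all V-functors f, g : (X,a) → (Y,b) such that k ≤ b (f x) (g x) for all x ∈ X, also k ≤ L b (F.map f 𝔵) (F.map g 𝔵) for all 𝔵 ∈ F.obj X. -/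
universe u v w

open CategoryTheory

section Aux14

variable {V : Type u} [CompleteLattice V] [CommMonoid V]

lemma qmul_iSup' (hV : QuantaleLaw V) (u : V) {ι : Sort w} (f : ι → V) :
    u * (⨆ i, f i) = ⨆ i, u * f i := by
  rw [← sSup_range, hV u (Set.range f), iSup_range]

lemma qmul_le_mul' (hV : QuantaleLaw V) {a b c d : V} (h1 : a ≤ b) (h2 : c ≤ d) :
    a * c ≤ b * d := by
  have key : ∀ u x y : V, x ≤ y → u * x ≤ u * y := by
    intro u x y hxy
    have h : u * (x ⊔ y) = u * x ⊔ u * y := by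
      have h0 := hV u {x, y}
      rw [sSup_pair] at h0
      rw [h0]
      exact iSup_pair
    calc u * x ≤ u * x ⊔ u * y := le_sup_left
      _ = u * (x ⊔ y) := h.symm
      _ = u * y := by rw [sup_eq_right.mpr hxy]
  calc a * c ≤ a * d := key a c d h2
    _ = d * a := mul_comm _ _
    _ ≤ d * b := key d a b h1
    _ = b * d := mul_comm _ _

lemma qbot_mul' (hV : QuantaleLaw V) (u : V) : (⊥ : V) * u = ⊥ := by
  rw [mul_comm]
  have h := hV u (∅ : Set V)
  simpa using h

lemma bot_mul_le' (hV : QuantaleLaw V) (v w : V) : (⊥ : V) * v ≤ w := by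
  rw [qbot_mul' hV]; exact bot_le

lemma mul_bot_le' (hV : QuantaleLaw V) (v w : V) : v * (⊥ : V) ≤ w := by
  rw [mul_comm, qbot_mul' hV]; exact bot_le

lemma dmul_le' (hV : QuantaleLaw V) {p : Prop} {v w : V} (h : p → v ≤ w) :
    (⨆ _ : p, (1 : V)) * v ≤ w := by
  rw [mul_comm, qmul_iSup' hV]
  exact iSup_le fun hp => by rw [mul_one]; exact h hp

lemma mul_dle' (hV : QuantaleLaw V) {p : Prop} {v w : V} (h : p → v ≤ w) :
    v * (⨆ _ : p, (1 : V)) ≤ w := by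
  rw [qmul_iSup' hV]
  exact iSup_le fun hp => by rw [mul_one]; exact h hp

/-- The discrete `V`-category structure. -/
def diag0 {X : Type v} : X → X → V := fun x y => ⨆ _ : x = y, (1 : V)

lemma diag0_refl {X : Type v} (x : X) : (1 : V) ≤ diag0 x x := le_iSup_of_le rfl le_rfl

lemma diag0_le {X : Type v} {a : X → X → V} (h : ∀ x, (1 : V) ≤ a x x) (x y : X) :
    (diag0 x y : V) ≤ a x y :=
  iSup_le fun hxy => hxy ▸ h x

lemma diag0_mono {X Y : Type v} (f : X → Y) (x y : X) :
    (diag0 x y : V) ≤ diag0 (f x) (f y) :=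
  iSup_le fun h => le_iSup_of_le (congrArg f h) le_rfl

lemma diag0_isVCat (hV : QuantaleLaw V) (X : Type v) :
    IsVCat (diag0 : X → X → V) :=
  ⟨fun x => diag0_refl x, fun x y z => dmul_le' hV fun h => by cases h; exact le_rfl⟩

/-- The collage of a `V`-relation, with discrete diagonal blocks. -/
def collD {X Y : Type v} (r : X → Y → V) : X ⊕ Y → X ⊕ Y → V
  | Sum.inl x, Sum.inl x' => diag0 x x'
  | Sum.inl x, Sum.inr y => r x y
  | Sum.inr _, Sum.inl _ => ⊥
  | Sum.inr y, Sum.inr y' => diag0 y y'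

lemma collD_isVCat (hV : QuantaleLaw V) {X Y : Type v} (r : X → Y → V) :
    IsVCat (collD r) := by
  constructor
  · rintro (x | y) <;> exact diag0_refl _
  · rintro (x | y) (x' | y') (x'' | y'') <;>
      first
        | exact bot_mul_le' hV _ _
        | exact mul_bot_le' hV _ _
        | exact dmul_le' hV fun h => by cases h; exact le_rfl
        | exact mul_dle' hV fun h => by cases h; exact le_rfl

/-- The three-object gluing of two collages. -/
def tri {X Y Z : Type v} (r : X → Y → V) (s : Y → Z → V) :
    (X ⊕ Y) ⊕ Z → (X ⊕ Y) ⊕ Z → V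
  | Sum.inl p, Sum.inl q => collD r p q
  | Sum.inl (Sum.inl x), Sum.inr z => ⨆ y, r x y * s y z
  | Sum.inl (Sum.inr y), Sum.inr z => s y z
  | Sum.inr _, Sum.inl _ => ⊥
  | Sum.inr z, Sum.inr z' => diag0 z z'

lemma tri_isVCat (hV : QuantaleLaw V) {X Y Z : Type v} (r : X → Y → V) (s : Y → Z → V) :
    IsVCat (tri r s) := by
  constructor
  · rintro ((x | y) | z) <;> exact diag0_refl _
  · rintro ((x | y) | z) ((x' | y') | z') ((x'' | y'') | z'') <;>
      first
        | exact bot_mul_le' hV _ _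
        | exact mul_bot_le' hV _ _
        | exact dmul_le' hV fun h => by cases h; exact le_rfl
        | exact mul_dle' hV fun h => by cases h; exact le_rfl
        | exact le_iSup (fun y => r x y * s y z'') y'

/-- The full collage of a `V`-category with itself. -/
def fullC {X : Type v} (a : X → X → V) : X ⊕ X → X ⊕ X → V
  | Sum.inl x, Sum.inl x' => a x x'
  | Sum.inl x, Sum.inr x' => a x x'
  | Sum.inr _, Sum.inl _ => ⊥
  | Sum.inr x, Sum.inr x' => a x x'

lemma fullC_isVCat (hV : QuantaleLaw V) {X : Type v} {a : X → X → V} (ha : IsVCat a) :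
    IsVCat (fullC a) := by
  constructor
  · rintro (x | x) <;> exact ha.1 _
  · rintro (x | x) (y | y) (z | z) <;>
      first
        | exact ha.2 _ _ _
        | exact bot_mul_le' hV _ _
        | exact mul_bot_le' hV _ _

/-- The four-block structure connecting the full collage and the discrete collage. -/
def w4 {X : Type v} (a : X → X → V) : (X ⊕ X) ⊕ (X ⊕ X) → (X ⊕ X) ⊕ (X ⊕ X) → V
  | Sum.inl (Sum.inl x), Sum.inl (Sum.inl y) => a x y
  | Sum.inl (Sum.inl x), Sum.inl (Sum.inr y) => a x y
  | Sum.inl (Sum.inl _), Sum.inr (Sum.inl _) => ⊥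
  | Sum.inl (Sum.inl x), Sum.inr (Sum.inr y) => a x y
  | Sum.inl (Sum.inr _), Sum.inl (Sum.inl _) => ⊥
  | Sum.inl (Sum.inr x), Sum.inl (Sum.inr y) => a x y
  | Sum.inl (Sum.inr _), Sum.inr (Sum.inl _) => ⊥
  | Sum.inl (Sum.inr x), Sum.inr (Sum.inr y) => a x y
  | Sum.inr (Sum.inl x), Sum.inl (Sum.inl y) => a x y
  | Sum.inr (Sum.inl x), Sum.inl (Sum.inr y) => a x y
  | Sum.inr (Sum.inl x), Sum.inr (Sum.inl y) => diag0 x y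
  | Sum.inr (Sum.inl x), Sum.inr (Sum.inr y) => a x y
  | Sum.inr (Sum.inr _), Sum.inl (Sum.inl _) => ⊥
  | Sum.inr (Sum.inr _), Sum.inl (Sum.inr _) => ⊥
  | Sum.inr (Sum.inr _), Sum.inr (Sum.inl _) => ⊥
  | Sum.inr (Sum.inr x), Sum.inr (Sum.inr y) => diag0 x y

lemma w4_isVCat (hV : QuantaleLaw V) {X : Type v} {a : X → X → V} (ha : IsVCat a) :
    IsVCat (w4 a) := by
  constructor
  · rintro ((x | x) | (x | x)) <;> first | exact ha.1 _ | exact diag0_refl _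
  · rintro ((x | x) | (x | x)) ((y | y) | (y | y)) ((z | z) | (z | z)) <;>
      first
        | exact ha.2 _ _ _
        | exact bot_mul_le' hV _ _
        | exact mul_bot_le' hV _ _
        | exact dmul_le' hV fun h => by cases h; exact le_rfl
        | exact mul_dle' hV fun h => by cases h; exact le_rfl

end Aux14

lemma fmap_fmap (F : Type u ⥤ Type u) {X Y Z : Type u} (f : X → Y) (g : Y → Z)
    (t : F.obj X) : F.map (TypeCat.ofHom g) (F.map (TypeCat.ofHom f) t) = F.map (TypeCat.ofHom (fun x => g (f x))) t := by
  rw [← FunctorToTypes.map_comp_apply]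
  rfl

lemma fmap_id' (F : Type u ⥤ Type u) {X : Type u} (t : F.obj X) :
    F.map (TypeCat.ofHom (fun x => x : X → X)) t = t :=
  FunctorToTypes.map_id_apply F t
/-- a lifting is induced by a lax extension iff it preserves initial
morphisms and is locally monotone. -/
theorem stmt_14 {V : Type u} [CompleteLattice V] [CommMonoid V] (hV : QuantaleLaw V)
    {F : Type u ⥤ Type u} (L : Lifting V F) :
    (∃ E : LaxExt V F, ∀ (X : Type u) (a : X → X → V), IsVCat a →
        ∀ t s : F.obj X, E.ext a t s = L.str a t s) ↔
    ((∀ {X Y : Type u} (a : X → X → V) (b : Y → Y → V) (f : X → Y),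
        IsVCat a → IsVCat b → IsInitialVFunctor a b f →
        IsInitialVFunctor (L.str a) (L.str b) (F.map (TypeCat.ofHom f))) ∧
     (∀ (X Y : Type u) (a : X → X → V) (b : Y → Y → V), IsVCat a → IsVCat b →
        ∀ f g : X → Y, IsVFunctor a b f → IsVFunctor a b g →
        (∀ x, (1 : V) ≤ b (f x) (g x)) →
        ∀ t : F.obj X, (1 : V) ≤ L.str b (F.map (TypeCat.ofHom f) t) (F.map (TypeCat.ofHom g) t))) := by
  constructor
  · rintro ⟨E, hE⟩
    constructor
    · intro X Y a b f ha hb hf t s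
      refine le_antisymm (L.map a b f ha hb (fun x y => (hf x y).le) t s) ?_
      rw [← hE X a ha t s, ← hE Y b hb (F.map (TypeCat.ofHom f) t) (F.map (TypeCat.ofHom f) s)]
      have key1 : (fun (y : Y) (x : X) => ⨆ y', b y y' * fnGraph f x y')
          = fun y x => b y (f x) := by
        funext y x
        apply le_antisymm
        · exact iSup_le fun y' => mul_dle' hV fun h => by cases h; exact le_rfl
        · refine le_iSup_of_le (f x) ?_
          have h1 : (fnGraph f x (f x) : V) = 1 := by simp [fnGraph]
          rw [h1, mul_one]
      have key2 : (fun (x x' : X) => ⨆ y, fnGraph f x y * b y (f x')) = a := by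
        funext x x'
        apply le_antisymm
        · exact iSup_le fun y => dmul_le' hV fun h => by cases h; exact (hf x x').ge
        · rw [hf x x']
          refine le_iSup_of_le (f x) ?_
          have h1 : (fnGraph f x (f x) : V) = 1 := by simp [fnGraph]
          rw [h1, one_mul]
      calc E.ext b (F.map (TypeCat.ofHom f) t) (F.map (TypeCat.ofHom f) s)
          = E.ext b (F.map (TypeCat.ofHom f) t) (F.map (TypeCat.ofHom f) s) * 1 := (mul_one _).symm
        _ ≤ E.ext b (F.map (TypeCat.ofHom f) t) (F.map (TypeCat.ofHom f) s) *
              E.ext (fun y x => fnGraph f x y) (F.map (TypeCat.ofHom f) s) s :=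
            qmul_le_mul' hV le_rfl (E.lax_map_op f s)
        _ ≤ E.ext (fun y x => ⨆ y', b y y' * fnGraph f x y') (F.map (TypeCat.ofHom f) t) s :=
            le_trans (le_iSup (fun u => E.ext b (F.map (TypeCat.ofHom f) t) u *
              E.ext (fun y x => fnGraph f x y) u s) (F.map (TypeCat.ofHom f) s))
              (E.comp b (fun y x => fnGraph f x y) (F.map (TypeCat.ofHom f) t) s)
        _ = E.ext (fun y x => b y (f x)) (F.map (TypeCat.ofHom f) t) s := by rw [key1]
        _ = 1 * E.ext (fun y x => b y (f x)) (F.map (TypeCat.ofHom f) t) s := (one_mul _).symm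
        _ ≤ E.ext (fnGraph f) t (F.map (TypeCat.ofHom f) t) *
              E.ext (fun y x => b y (f x)) (F.map (TypeCat.ofHom f) t) s :=
            qmul_le_mul' hV (E.lax_map f t) le_rfl
        _ ≤ E.ext (fun x x' => ⨆ y, fnGraph f x y * b y (f x')) t s :=
            le_trans (le_iSup (fun u => E.ext (fnGraph f) t u *
              E.ext (fun y x => b y (f x)) u s) (F.map (TypeCat.ofHom f) t))
              (E.comp (fnGraph f) (fun y x => b y (f x)) t s)
        _ = E.ext a t s := by rw [key2]
    · intro X Y a b ha hb f g hfm hgm hfg t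
      rw [← hE Y b hb (F.map (TypeCat.ofHom f) t) (F.map (TypeCat.ofHom g) t)]
      have hle : ∀ y y', (⨆ x, fnGraph f x y * fnGraph g x y') ≤ b y y' := by
        intro y y'
        refine iSup_le fun x => dmul_le' hV fun h => ?_
        cases h
        exact iSup_le fun h' => by cases h'; exact hfg x
      calc (1 : V) = 1 * 1 := (one_mul 1).symm
        _ ≤ E.ext (fun y x => fnGraph f x y) (F.map (TypeCat.ofHom f) t) t *
              E.ext (fnGraph g) t (F.map (TypeCat.ofHom g) t) :=
            qmul_le_mul' hV (E.lax_map_op f t) (E.lax_map g t)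
        _ ≤ E.ext (fun y y' => ⨆ x, fnGraph f x y * fnGraph g x y')
              (F.map (TypeCat.ofHom f) t) (F.map (TypeCat.ofHom g) t) :=
            le_trans (le_iSup (fun u => E.ext (fun y x => fnGraph f x y) (F.map (TypeCat.ofHom f) t) u *
              E.ext (fnGraph g) u (F.map (TypeCat.ofHom g) t)) t)
              (E.comp (fun y x => fnGraph f x y) (fnGraph g) (F.map (TypeCat.ofHom f) t) (F.map (TypeCat.ofHom g) t))
        _ ≤ E.ext b (F.map (TypeCat.ofHom f) t) (F.map (TypeCat.ofHom g) t) := E.mono _ _ hle _ _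
  · rintro ⟨hinit, hmono⟩
    refine ⟨⟨fun {X Y} r t s => L.str (collD r) (F.map (TypeCat.ofHom Sum.inl) t) (F.map (TypeCat.ofHom Sum.inr) s),
      ?_, ?_, ?_, ?_⟩, ?_⟩
    · -- mono
      intro X Y r r' hrr' t s
      have hfun : IsVFunctor (collD r) (collD r') (fun z => z) := by
        rintro (x | y) (x' | y') <;> first | exact le_rfl | exact hrr' _ _
      have h := L.map _ _ _ (collD_isVCat hV r) (collD_isVCat hV r') hfun
        (F.map (TypeCat.ofHom Sum.inl) t) (F.map (TypeCat.ofHom Sum.inr) s)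
      simpa [fmap_id'] using h
    · -- comp
      intro X Y Z r s t u0
      refine iSup_le fun u => ?_
      have htri := tri_isVCat hV r s
      have h1 : L.str (collD r) (F.map (TypeCat.ofHom Sum.inl) t) (F.map (TypeCat.ofHom Sum.inr) u) ≤
          L.str (tri r s)
            (F.map (TypeCat.ofHom (fun x : X => (Sum.inl (Sum.inl x) : (X ⊕ Y) ⊕ Z))) t)
            (F.map (TypeCat.ofHom (fun y : Y => (Sum.inl (Sum.inr y) : (X ⊕ Y) ⊕ Z))) u) := by
        have hfun : IsVFunctor (collD r) (tri r s) Sum.inl := by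
          rintro (x | y) (x' | y') <;> exact le_rfl
        have h := L.map _ _ _ (collD_isVCat hV r) htri hfun
          (F.map (TypeCat.ofHom Sum.inl) t) (F.map (TypeCat.ofHom Sum.inr) u)
        rwa [fmap_fmap, fmap_fmap] at h
      have h2 : L.str (collD s) (F.map (TypeCat.ofHom Sum.inl) u) (F.map (TypeCat.ofHom Sum.inr) u0) ≤
          L.str (tri r s)
            (F.map (TypeCat.ofHom (fun y : Y => (Sum.inl (Sum.inr y) : (X ⊕ Y) ⊕ Z))) u)
            (F.map (TypeCat.ofHom (fun z : Z => (Sum.inr z : (X ⊕ Y) ⊕ Z))) u0) := by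
        have hfun : IsVFunctor (collD s) (tri r s)
            (fun p => match p with
              | Sum.inl y => Sum.inl (Sum.inr y)
              | Sum.inr z => Sum.inr z) := by
          rintro (y | z) (y' | z') <;> exact le_rfl
        have h := L.map _ _ _ (collD_isVCat hV s) htri hfun
          (F.map (TypeCat.ofHom Sum.inl) u) (F.map (TypeCat.ofHom Sum.inr) u0)
        rwa [fmap_fmap, fmap_fmap] at h
      have htr := (L.isVCat _ htri).2
        (F.map (TypeCat.ofHom (fun x : X => (Sum.inl (Sum.inl x) : (X ⊕ Y) ⊕ Z))) t)
        (F.map (TypeCat.ofHom (fun y : Y => (Sum.inl (Sum.inr y) : (X ⊕ Y) ⊕ Z))) u)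
        (F.map (TypeCat.ofHom (fun z : Z => (Sum.inr z : (X ⊕ Y) ⊕ Z))) u0)
      have hini : L.str (collD (fun x z => ⨆ y, r x y * s y z))
          (F.map (TypeCat.ofHom Sum.inl) t) (F.map (TypeCat.ofHom Sum.inr) u0) =
          L.str (tri r s)
            (F.map (TypeCat.ofHom (fun x : X => (Sum.inl (Sum.inl x) : (X ⊕ Y) ⊕ Z))) t)
            (F.map (TypeCat.ofHom (fun z : Z => (Sum.inr z : (X ⊕ Y) ⊕ Z))) u0) := by
        have hj : IsInitialVFunctor (collD (fun x z => ⨆ y, r x y * s y z)) (tri r s)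
            (fun p => match p with
              | Sum.inl x => Sum.inl (Sum.inl x)
              | Sum.inr z => Sum.inr z) := by
          rintro (x | z) (x' | z') <;> rfl
        have h := hinit _ _ _ (collD_isVCat hV _) htri hj
          (F.map (TypeCat.ofHom Sum.inl) t) (F.map (TypeCat.ofHom Sum.inr) u0)
        rwa [fmap_fmap, fmap_fmap] at h
      exact le_trans (qmul_le_mul' hV h1 h2) (le_trans htr hini.ge)
    · -- lax_map
      intro X Y f t
      show (1 : V) ≤ L.str (collD (fnGraph f)) (F.map (TypeCat.ofHom Sum.inl) t)
        (F.map (TypeCat.ofHom Sum.inr) (F.map (TypeCat.ofHom f) t))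
      rw [fmap_fmap]
      exact hmono X (X ⊕ Y) diag0 (collD (fnGraph f)) (diag0_isVCat hV X)
        (collD_isVCat hV _) Sum.inl (fun x => Sum.inr (f x))
        (fun x y => le_rfl) (fun x y => diag0_mono f x y)
        (fun x => le_iSup_of_le rfl le_rfl) t
    · -- lax_map_op
      intro X Y f t
      show (1 : V) ≤ L.str (collD (fun y x => fnGraph f x y))
        (F.map (TypeCat.ofHom Sum.inl) (F.map (TypeCat.ofHom f) t)) (F.map (TypeCat.ofHom Sum.inr) t)
      rw [fmap_fmap]
      exact hmono X (Y ⊕ X) diag0 (collD (fun y x => fnGraph f x y)) (diag0_isVCat hV X)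
        (collD_isVCat hV _) (fun x => Sum.inl (f x)) Sum.inr
        (fun x y => diag0_mono f x y) (fun x y => le_rfl)
        (fun x => le_iSup_of_le rfl le_rfl) t
    · -- agreement on V-categories
      intro X a ha t s
      show L.str (collD a) (F.map (TypeCat.ofHom Sum.inl) t) (F.map (TypeCat.ofHom Sum.inr) s) = L.str a t s
      have hfc := fullC_isVCat hV ha
      have hcd := collD_isVCat hV a
      have hw4 := w4_isVCat hV ha
      have hub : L.str (collD a) (F.map (TypeCat.ofHom Sum.inl) t) (F.map (TypeCat.ofHom Sum.inr) s) ≤ L.str a t s := by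
        have hfun : IsVFunctor (collD a) a (fun p => match p with
            | Sum.inl x => x | Sum.inr x => x) := by
          rintro (x | x) (y | y) <;>
            first
              | exact diag0_le ha.1 _ _
              | exact le_rfl
              | exact bot_le
        have h := L.map _ _ _ hcd ha hfun (F.map (TypeCat.ofHom Sum.inl) t) (F.map (TypeCat.ofHom Sum.inr) s)
        have e1 : F.map (TypeCat.ofHom (fun p : X ⊕ X => match p with
            | Sum.inl x => x | Sum.inr x => x)) (F.map (TypeCat.ofHom Sum.inl) t) = t := by
          rw [fmap_fmap]; exact fmap_id' F t
        have e2 : F.map (TypeCat.ofHom (fun p : X ⊕ X => match p with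
            | Sum.inl x => x | Sum.inr x => x)) (F.map (TypeCat.ofHom Sum.inr) s) = s := by
          rw [fmap_fmap]; exact fmap_id' F s
        rwa [e1, e2] at h
      have hA : L.str a t s ≤ L.str (fullC a) (F.map (TypeCat.ofHom Sum.inl) t) (F.map (TypeCat.ofHom Sum.inr) s) := by
        have hini : IsInitialVFunctor a (fullC a) Sum.inl := fun x y => rfl
        have h0 := hinit _ _ _ ha hfc hini t s
        have hop : (1 : V) ≤ L.str (fullC a) (F.map (TypeCat.ofHom Sum.inl) s) (F.map (TypeCat.ofHom Sum.inr) s) :=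
          hmono X (X ⊕ X) a (fullC a) ha hfc Sum.inl Sum.inr
            (fun x y => le_rfl) (fun x y => le_rfl) (fun x => ha.1 x) s
        calc L.str a t s = L.str a t s * 1 := (mul_one _).symm
          _ ≤ L.str (fullC a) (F.map (TypeCat.ofHom Sum.inl) t) (F.map (TypeCat.ofHom Sum.inl) s) *
                L.str (fullC a) (F.map (TypeCat.ofHom Sum.inl) s) (F.map (TypeCat.ofHom Sum.inr) s) :=
              qmul_le_mul' hV (le_of_eq h0) hop
          _ ≤ L.str (fullC a) (F.map (TypeCat.ofHom Sum.inl) t) (F.map (TypeCat.ofHom Sum.inr) s) :=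
              (L.isVCat _ hfc).2 _ _ _
      have hB : L.str (fullC a) (F.map (TypeCat.ofHom Sum.inl) t) (F.map (TypeCat.ofHom Sum.inr) s) ≤
          L.str (collD a) (F.map (TypeCat.ofHom Sum.inl) t) (F.map (TypeCat.ofHom Sum.inr) s) := by
        have e1 : L.str (collD a) (F.map (TypeCat.ofHom Sum.inl) t) (F.map (TypeCat.ofHom Sum.inr) s) =
            L.str (w4 a)
              (F.map (TypeCat.ofHom (fun x : X => (Sum.inr (Sum.inl x) : (X ⊕ X) ⊕ (X ⊕ X)))) t)
              (F.map (TypeCat.ofHom (fun x : X => (Sum.inr (Sum.inr x) : (X ⊕ X) ⊕ (X ⊕ X)))) s) := by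
          have hini2 : IsInitialVFunctor (collD a) (w4 a) Sum.inr := by
            rintro (x | x) (y | y) <;> rfl
          have h := hinit _ _ _ hcd hw4 hini2 (F.map (TypeCat.ofHom Sum.inl) t) (F.map (TypeCat.ofHom Sum.inr) s)
          rwa [fmap_fmap, fmap_fmap] at h
        have e2 : L.str (fullC a) (F.map (TypeCat.ofHom Sum.inl) t) (F.map (TypeCat.ofHom Sum.inr) s) ≤
            L.str (w4 a)
              (F.map (TypeCat.ofHom (fun x : X => (Sum.inl (Sum.inl x) : (X ⊕ X) ⊕ (X ⊕ X)))) t)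
              (F.map (TypeCat.ofHom (fun x : X => (Sum.inl (Sum.inr x) : (X ⊕ X) ⊕ (X ⊕ X)))) s) := by
          have hfun : IsVFunctor (fullC a) (w4 a) Sum.inl := by
            rintro (x | x) (y | y) <;> exact le_rfl
          have h := L.map _ _ _ hfc hw4 hfun (F.map (TypeCat.ofHom Sum.inl) t) (F.map (TypeCat.ofHom Sum.inr) s)
          rwa [fmap_fmap, fmap_fmap] at h
        have hop21 : (1 : V) ≤ L.str (w4 a)
            (F.map (TypeCat.ofHom (fun x : X => (Sum.inr (Sum.inl x) : (X ⊕ X) ⊕ (X ⊕ X)))) t)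
            (F.map (TypeCat.ofHom (fun x : X => (Sum.inl (Sum.inl x) : (X ⊕ X) ⊕ (X ⊕ X)))) t) :=
          hmono X ((X ⊕ X) ⊕ (X ⊕ X)) diag0 (w4 a) (diag0_isVCat hV X) hw4
            (fun x : X => (Sum.inr (Sum.inl x) : (X ⊕ X) ⊕ (X ⊕ X)))
            (fun x : X => (Sum.inl (Sum.inl x) : (X ⊕ X) ⊕ (X ⊕ X)))
            (fun x y => le_rfl) (fun x y => diag0_le ha.1 x y) (fun x => ha.1 x) t
        have hop12 : (1 : V) ≤ L.str (w4 a)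
            (F.map (TypeCat.ofHom (fun x : X => (Sum.inl (Sum.inr x) : (X ⊕ X) ⊕ (X ⊕ X)))) s)
            (F.map (TypeCat.ofHom (fun x : X => (Sum.inr (Sum.inr x) : (X ⊕ X) ⊕ (X ⊕ X)))) s) :=
          hmono X ((X ⊕ X) ⊕ (X ⊕ X)) diag0 (w4 a) (diag0_isVCat hV X) hw4
            (fun x : X => (Sum.inl (Sum.inr x) : (X ⊕ X) ⊕ (X ⊕ X)))
            (fun x : X => (Sum.inr (Sum.inr x) : (X ⊕ X) ⊕ (X ⊕ X)))
            (fun x y => diag0_le ha.1 x y) (fun x y => le_rfl) (fun x => ha.1 x) s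
        have htr1 := (L.isVCat _ hw4).2
            (F.map (TypeCat.ofHom (fun x : X => (Sum.inl (Sum.inl x) : (X ⊕ X) ⊕ (X ⊕ X)))) t)
            (F.map (TypeCat.ofHom (fun x : X => (Sum.inl (Sum.inr x) : (X ⊕ X) ⊕ (X ⊕ X)))) s)
            (F.map (TypeCat.ofHom (fun x : X => (Sum.inr (Sum.inr x) : (X ⊕ X) ⊕ (X ⊕ X)))) s)
        have htr2 := (L.isVCat _ hw4).2
            (F.map (TypeCat.ofHom (fun x : X => (Sum.inr (Sum.inl x) : (X ⊕ X) ⊕ (X ⊕ X)))) t)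
            (F.map (TypeCat.ofHom (fun x : X => (Sum.inl (Sum.inl x) : (X ⊕ X) ⊕ (X ⊕ X)))) t)
            (F.map (TypeCat.ofHom (fun x : X => (Sum.inr (Sum.inr x) : (X ⊕ X) ⊕ (X ⊕ X)))) s)
        calc L.str (fullC a) (F.map (TypeCat.ofHom Sum.inl) t) (F.map (TypeCat.ofHom Sum.inr) s)
            = 1 * (L.str (fullC a) (F.map (TypeCat.ofHom Sum.inl) t) (F.map (TypeCat.ofHom Sum.inr) s) * 1) := by
              rw [mul_one, one_mul]
          _ ≤ L.str (w4 a)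
                (F.map (TypeCat.ofHom (fun x : X => (Sum.inr (Sum.inl x) : (X ⊕ X) ⊕ (X ⊕ X)))) t)
                (F.map (TypeCat.ofHom (fun x : X => (Sum.inl (Sum.inl x) : (X ⊕ X) ⊕ (X ⊕ X)))) t) *
              (L.str (w4 a)
                (F.map (TypeCat.ofHom (fun x : X => (Sum.inl (Sum.inl x) : (X ⊕ X) ⊕ (X ⊕ X)))) t)
                (F.map (TypeCat.ofHom (fun x : X => (Sum.inl (Sum.inr x) : (X ⊕ X) ⊕ (X ⊕ X)))) s) *
               L.str (w4 a)
                (F.map (TypeCat.ofHom (fun x : X => (Sum.inl (Sum.inr x) : (X ⊕ X) ⊕ (X ⊕ X)))) s)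
                (F.map (TypeCat.ofHom (fun x : X => (Sum.inr (Sum.inr x) : (X ⊕ X) ⊕ (X ⊕ X)))) s)) :=
              qmul_le_mul' hV hop21 (qmul_le_mul' hV e2 hop12)
          _ ≤ L.str (w4 a)
                (F.map (TypeCat.ofHom (fun x : X => (Sum.inr (Sum.inl x) : (X ⊕ X) ⊕ (X ⊕ X)))) t)
                (F.map (TypeCat.ofHom (fun x : X => (Sum.inl (Sum.inl x) : (X ⊕ X) ⊕ (X ⊕ X)))) t) *
              L.str (w4 a)
                (F.map (TypeCat.ofHom (fun x : X => (Sum.inl (Sum.inl x) : (X ⊕ X) ⊕ (X ⊕ X)))) t)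
                (F.map (TypeCat.ofHom (fun x : X => (Sum.inr (Sum.inr x) : (X ⊕ X) ⊕ (X ⊕ X)))) s) :=
              qmul_le_mul' hV le_rfl htr1
          _ ≤ L.str (w4 a)
                (F.map (TypeCat.ofHom (fun x : X => (Sum.inr (Sum.inl x) : (X ⊕ X) ⊕ (X ⊕ X)))) t)
                (F.map (TypeCat.ofHom (fun x : X => (Sum.inr (Sum.inr x) : (X ⊕ X) ⊕ (X ⊕ X)))) s) :=
              htr2
          _ = L.str (collD a) (F.map (TypeCat.ofHom Sum.inl) t) (F.map (TypeCat.ofHom Sum.inr) s) := e1.symm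
      exact le_antisymm hub (le_trans hA hB)
end

section
/- Let V be a commutative unital quantale, F : Type u ⥤ Type u a functor, E a lax extension of F to V-Rel, κ : Type u, and 𝔯 : F.obj κ → V. For each type X and each p : X → κ → V, define λ_X p : F.obj X → V by λ_X p 𝔵 = ⨆_{t ∈ F.obj κ} (𝔯 t ⊗ E p♭ t 𝔵), where p♭ : κ → X → V is the transpose p♭ i x = p x i (so E p♭ : F.obj κ → F.obj X → V). Then λ is compatible with the lifting induced by E: for every V-category (X,a) and every V-functor f : (X,a) → V^κ, E a 𝔵 𝔶 ≤ hom (λ_X f 𝔵) (λ_X f 𝔶) for all 𝔵,𝔶 ∈ F.obj X. (Every predicate lifting induced by a lax extension is compatible with the lifting induced by that lax extension.) -/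
universe u v w

open CategoryTheory

lemma quant_mul_iSup {V : Type u} [CompleteLattice V] [CommMonoid V] (hV : QuantaleLaw V)
    {ι : Sort*} (u : V) (g : ι → V) : u * (⨆ i, g i) = ⨆ i, u * g i := by
  rw [iSup, hV u (Set.range g), iSup_range]

lemma quant_mul_left_mono {V : Type u} [CompleteLattice V] [CommMonoid V]
    (hV : QuantaleLaw V) {u a b : V} (h : a ≤ b) : u * a ≤ u * b := by
  have : u * (a ⊔ b) = (u * a) ⊔ (u * b) := by
    have := quant_mul_iSup hV u (fun p : Bool => if p then a else b)
    simpa [iSup_bool_eq] using this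
  calc u * a ≤ (u * a) ⊔ (u * b) := le_sup_left
    _ = u * (a ⊔ b) := this.symm
    _ = u * b := by rw [sup_eq_right.mpr h]

/-- every predicate lifting induced by a lax extension (via `𝔯` and the
extension of the transpose) is compatible with the lifting induced by the lax
extension. -/
theorem stmt_16 {V : Type u} [CompleteLattice V] [CommMonoid V] (hV : QuantaleLaw V)
    {F : Type u ⥤ Type u} (E : LaxExt V F) (κ : Type u) (𝔯 : F.obj κ → V)
    {X : Type u} (a : X → X → V) (ha : IsVCat a)
    (f : X → κ → V) (hf : IsVFunctor a (powStr κ) f) (t s : F.obj X) :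
    E.ext a t s ≤
      qhom (⨆ w : F.obj κ, 𝔯 w * E.ext (fun i z => f z i) w t)
           (⨆ w : F.obj κ, 𝔯 w * E.ext (fun i z => f z i) w s) := by
  apply le_sSup
  show (⨆ w : F.obj κ, 𝔯 w * E.ext (fun i z => f z i) w t) * E.ext a t s ≤ _
  rw [mul_comm, quant_mul_iSup hV]
  apply iSup_mono
  intro w
  calc E.ext a t s * (𝔯 w * E.ext (fun i z => f z i) w t)
      = 𝔯 w * (E.ext (fun i z => f z i) w t * E.ext a t s) := by rw [mul_comm (E.ext a t s), mul_assoc]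
    _ ≤ 𝔯 w * E.ext (fun i z => f z i) w s := by
        apply quant_mul_left_mono hV
        calc E.ext (fun i z => f z i) w t * E.ext a t s
            ≤ ⨆ u : F.obj X, E.ext (fun i z => f z i) w u * E.ext a u s :=
              le_iSup (fun u => E.ext (fun i z => f z i) w u * E.ext a u s) t
          _ ≤ E.ext (fun i z => ⨆ y, f y i * a y z) w s := E.comp _ _ _ _
          _ ≤ E.ext (fun i z => f z i) w s := by
              apply E.mono
              intro i z
              apply iSup_le
              intro y
              have h1 : a y z ≤ qhom (f y i) (f z i) :=
                le_trans (hf y z) (iInf_le _ i)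
              have h2 : f y i * qhom (f y i) (f z i) ≤ f z i := by
                rw [qhom, hV]
                exact iSup₂_le fun v hv => hv
              exact le_trans (quant_mul_left_mono hV h1) h2
end
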